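/- arXiv:2012.14196 — 2 statements merged into one kernel-verified Lean document; each statement's English description precedes it below -/
import Mathlib

section
/- For every m ≥ 1 there exist constants c_k > 0 (k = 1, 2, …), independent of p, such that for every p ∈ ℕ there is a smooth function d̃_p : ℝ^m × ℝ^m → ℝ satisfying: (1) |d̃_p(x, y) − |x − y|| < 1/√p for all x, y ∈ ℝ^m, and (2) for every multi-index α with |α| ≥ 1, |∂^α_x d̃_p(x, y)| ≤ c_{|α|} p^{(|α|−1)/2} for all x, y ∈ ℝ^m. -/
open MeasureTheory

noncomputable section

namespace Stmt12Aux

variable {E F : Type*} [NormedAddCommGroup E] [NormedSpace ℝ E]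
  [NormedAddCommGroup F] [NormedSpace ℝ F]

theorem fderiv_comp_add_right'' (f : E → F) (v x : E) :
    fderiv ℝ (fun z => f (z + v)) x = fderiv ℝ f (x + v) := by
  by_cases h : DifferentiableAt ℝ f (x + v)
  · have h1 : DifferentiableAt ℝ (fun z : E => z + v) x :=
      (differentiable_id.add_const v) x
  -- chain rule
    have h2 := fderiv_comp (𝕜 := ℝ) x h h1
    have h3 : fderiv ℝ (fun z : E => z + v) x = ContinuousLinearMap.id ℝ E := by
      rw [fderiv_add_const]; exact fderiv_id
    rw [Function.comp_def] at h2
    rw [h2, h3, ContinuousLinearMap.comp_id]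
  · have h2 : ¬ DifferentiableAt ℝ (fun z => f (z + v)) x := by
      intro hd
      apply h
      have hx' : DifferentiableAt ℝ (fun z => f (z + v)) ((x + v) - v) := by
        simpa [add_sub_cancel_right] using hd
      have := hx'.comp (x + v) ((differentiable_id.sub_const v) (x + v))
      simpa [Function.comp_def, sub_add_cancel] using this
    rw [fderiv_zero_of_not_differentiableAt h, fderiv_zero_of_not_differentiableAt h2]

theorem iteratedFDeriv_comp_add_right'' (k : ℕ) (f : E → F) (v : E) (x : E) :
    iteratedFDeriv ℝ k (fun z => f (z + v)) x = iteratedFDeriv ℝ k f (x + v) := by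
  induction k generalizing x with
  | zero => ext1 mv; simp
  | succ k ih =>
    ext1 mv
    rw [iteratedFDeriv_succ_apply_left, iteratedFDeriv_succ_apply_left]
    have hfun : iteratedFDeriv ℝ k (fun z => f (z + v))
        = fun z => iteratedFDeriv ℝ k f (z + v) := funext fun z => ih z
    rw [hfun, fderiv_comp_add_right'' (iteratedFDeriv ℝ k f) v x]

end Stmt12Aux



namespace Stmt12Aux

variable {E F : Type*} [NormedAddCommGroup E] [NormedSpace ℝ E]
  [NormedAddCommGroup F] [NormedSpace ℝ F]

def smulCLE (c : ℝ) (hc : c ≠ 0) : E ≃L[ℝ] E :=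
  { toFun := fun z => c • z
    map_add' := smul_add c
    map_smul' := fun r z => smul_comm c r z
    invFun := fun z => c⁻¹ • z
    left_inv := fun z => by simp [smul_smul, inv_mul_cancel₀ hc]
    right_inv := fun z => by simp [smul_smul, mul_inv_cancel₀ hc]
    continuous_toFun := continuous_const_smul c
    continuous_invFun := continuous_const_smul c⁻¹ }

@[simp] lemma smulCLE_apply (c : ℝ) (hc : c ≠ 0) (z : E) : smulCLE c hc z = c • z := rfl

@[simp] lemma smulCLE_symm_apply (c : ℝ) (hc : c ≠ 0) (z : E) :
    (smulCLE c hc (E := E)).symm z = c⁻¹ • z := rfl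

variable {H : Type*} [NormedAddCommGroup H] [InnerProductSpace ℝ H]

theorem homog (k : ℕ) (z : H) (hz : z ≠ 0) :
    ‖iteratedFDeriv ℝ k (fun w : H => ‖w‖) z‖ ≤
      ‖z‖ * ‖z‖⁻¹ ^ k * ‖iteratedFDeriv ℝ k (fun w : H => ‖w‖) (‖z‖⁻¹ • z)‖ := by
  set Nn : H → ℝ := fun w => ‖w‖ with hNn
  set S : Set H := {0}ᶜ with hSdef
  have hS : IsOpen S := isOpen_compl_singleton
  have hSu : UniqueDiffOn ℝ S := hS.uniqueDiffOn
  have hNS : ContDiffOn ℝ (k : ℕ∞) Nn S := fun w hw =>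
    (contDiffAt_norm ℝ (by simpa [hSdef] using hw)).contDiffWithinAt
  set c := ‖z‖ with hcdef
  have hc0 : 0 < c := norm_pos_iff.2 hz
  have hc : c ≠ 0 := hc0.ne'
  set w : H := c⁻¹ • z with hwdef
  have hwne : w ≠ 0 := smul_ne_zero (inv_ne_zero hc) hz
  have hwS : w ∈ S := by simpa [hSdef] using hwne
  have hzS : z ∈ S := by simpa [hSdef] using hz
  set e := smulCLE (E := H) c hc with hedef
  have hew : e w = z := by
    simp [hedef, hwdef, smul_smul, mul_inv_cancel₀ hc, inv_mul_cancel₀ hc]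
  have hpre : (⇑e) ⁻¹' S = S := by
    ext w'
    simp [hSdef, hedef, smul_eq_zero, hc]
  have key := e.iteratedFDerivWithin_comp_right Nn hSu (x := w) (hew ▸ hzS) k
  rw [hpre] at key
  have hcomp : Nn ∘ ⇑e = c • Nn := by
    funext w'
    simp [hNn, hedef, norm_smul, abs_of_pos hc0]
  rw [hcomp, iteratedFDerivWithin_const_smul_apply (hNS w hwS) hSu hwS, hew] at key
  set A := iteratedFDerivWithin ℝ k Nn S w with hA
  set B := iteratedFDerivWithin ℝ k Nn S z with hBdef
  have hB : B = (c • A).compContinuousLinearMap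
      (fun _ => ((smulCLE (E := H) c hc).symm : H →L[ℝ] H)) := by
    rw [key]
    ext mv
    simp only [ContinuousMultilinearMap.compContinuousLinearMap_apply,
      ContinuousLinearEquiv.coe_coe]
    congr 1
    funext i
    exact (e.apply_symm_apply (mv i)).symm
  have hesymm : ‖((smulCLE (E := H) c hc).symm : H →L[ℝ] H)‖ ≤ c⁻¹ := by
    refine ContinuousLinearMap.opNorm_le_bound _ (by positivity) fun w' => ?_
    simp [norm_smul, abs_of_pos hc0]
  have hglobB : iteratedFDeriv ℝ k Nn z = B :=
    (iteratedFDerivWithin_of_isOpen k hS hzS).symm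
  have hglobA : iteratedFDeriv ℝ k Nn w = A :=
    (iteratedFDerivWithin_of_isOpen k hS hwS).symm
  rw [hglobB, hglobA, hB]
  refine le_trans (ContinuousMultilinearMap.norm_compContinuousLinearMap_le _ _) ?_
  have h1 : ‖c • A‖ = c * ‖A‖ := by
    rw [show ‖c • A‖ = ‖c‖ * ‖A‖ from norm_smul c A, Real.norm_eq_abs, abs_of_pos hc0]
  have h2 : ∏ _i : Fin k, ‖((smulCLE (E := H) c hc).symm : H →L[ℝ] H)‖ ≤ (c⁻¹) ^ k := by
    rw [Finset.prod_const, Finset.card_univ, Fintype.card_fin]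
    exact pow_le_pow_left₀ (norm_nonneg _) hesymm k
  rw [h1]
  calc c * ‖A‖ * ∏ _i : Fin k, ‖((smulCLE (E := H) c hc).symm : H →L[ℝ] H)‖
      ≤ c * ‖A‖ * (c⁻¹) ^ k := mul_le_mul_of_nonneg_left h2 (by positivity)
    _ = c * c⁻¹ ^ k * ‖A‖ := by ring

end Stmt12Aux



namespace Stmt12Aux

variable (m : ℕ)

def pad (a : ℝ) (u : EuclideanSpace ℝ (Fin m)) : EuclideanSpace ℝ (Fin (m + 1)) :=
  (WithLp.equiv 2 (Fin (m + 1) → ℝ)).symm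
    (Fin.cons a (WithLp.equiv 2 (Fin m → ℝ) u))

lemma pad_apply_zero (a : ℝ) (u : EuclideanSpace ℝ (Fin m)) :
    pad m a u 0 = a := by
  simp [pad, WithLp.equiv_symm_apply, PiLp.toLp_apply]

lemma pad_apply_succ (a : ℝ) (u : EuclideanSpace ℝ (Fin m)) (i : Fin m) :
    pad m a u i.succ = u i := by
  simp [pad, WithLp.equiv_symm_apply, PiLp.toLp_apply, WithLp.equiv_apply]

lemma norm_pad (a : ℝ) (u : EuclideanSpace ℝ (Fin m)) :
    ‖pad m a u‖ = Real.sqrt (a ^ 2 + ‖u‖ ^ 2) := by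
  rw [EuclideanSpace.norm_eq]
  congr 1
  rw [Fin.sum_univ_succ, pad_apply_zero]
  congr 1
  · simp [Real.norm_eq_abs, sq_abs]
  · have : ‖u‖ ^ 2 = ∑ i : Fin m, ‖u i‖ ^ 2 := by
      rw [EuclideanSpace.norm_eq, Real.sq_sqrt]
      positivity
    rw [this]
    refine Finset.sum_congr rfl fun i _ => ?_
    rw [pad_apply_succ]

lemma pad_add (a b : ℝ) (u v : EuclideanSpace ℝ (Fin m)) :
    pad m (a + b) (u + v) = pad m a u + pad m b v := by
  rw [pad, pad, pad, WithLp.equiv_symm_apply, ← WithLp.toLp_add]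
  congr 1
  funext i
  refine Fin.cases ?_ (fun j => ?_) i <;>
    simp [WithLp.equiv_apply]

lemma pad_smul (c : ℝ) (u : EuclideanSpace ℝ (Fin m)) :
    pad m (c * 0) (c • u) = c • pad m 0 u := by
  rw [pad, pad, WithLp.equiv_symm_apply, ← WithLp.toLp_smul]
  congr 1
  funext i
  refine Fin.cases ?_ (fun j => ?_) i <;>
    simp [WithLp.equiv_apply, Fin.cons]

def J : EuclideanSpace ℝ (Fin m) →L[ℝ] EuclideanSpace ℝ (Fin (m + 1)) :=
  LinearMap.toContinuousLinearMap
    { toFun := pad m 0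
      map_add' := fun u v => by simpa using pad_add m 0 0 u v
      map_smul' := fun c u => by simpa using pad_smul m c u }

lemma J_apply (u : EuclideanSpace ℝ (Fin m)) : J m u = pad m 0 u := rfl

lemma norm_J (u : EuclideanSpace ℝ (Fin m)) : ‖J m u‖ = ‖u‖ := by
  rw [J_apply, norm_pad]
  simp [Real.sqrt_sq (norm_nonneg u)]

lemma norm_J_le : ‖J m‖ ≤ 1 :=
  ContinuousLinearMap.opNorm_le_bound _ zero_le_one fun u => by rw [norm_J, one_mul]

lemma J_add_pad (u : EuclideanSpace ℝ (Fin m)) :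
    J m u + pad m 1 0 = pad m 1 u := by
  rw [J_apply, ← pad_add]
  simp

lemma one_le_norm_pad_one (u : EuclideanSpace ℝ (Fin m)) :
    1 ≤ ‖pad m 1 u‖ := by
  rw [norm_pad]
  rw [show (1:ℝ) = Real.sqrt 1 from (Real.sqrt_one).symm]
  apply Real.sqrt_le_sqrt
  rw [Real.sqrt_one]
  nlinarith [sq_nonneg ‖u‖]

end Stmt12Aux



namespace Stmt12AuxD

variable {H : Type*} [NormedAddCommGroup H] [InnerProductSpace ℝ H]
  [FiniteDimensional ℝ H]

theorem sphere_bound (k : ℕ) : ∃ C : ℝ, 0 < C ∧ ∀ w : H, ‖w‖ = 1 →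
    ‖iteratedFDeriv ℝ k (fun z : H => ‖z‖) w‖ ≤ C := by
  set Nn : H → ℝ := fun w => ‖w‖ with hNn
  set S : Set H := {0}ᶜ with hSdef
  have hS : IsOpen S := isOpen_compl_singleton
  have hSu : UniqueDiffOn ℝ S := hS.uniqueDiffOn
  have hNS : ContDiffOn ℝ (⊤ : ℕ∞) Nn S := fun w hw =>
    (contDiffAt_norm ℝ (by simpa [hSdef] using hw)).contDiffWithinAt
  have hcont : ContinuousOn (iteratedFDeriv ℝ k Nn) S := by
    refine (hNS.continuousOn_iteratedFDerivWithin (by exact_mod_cast le_top) hSu).congr ?_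
    exact fun z hz => (iteratedFDerivWithin_of_isOpen k hS hz).symm
  have hsub : Metric.sphere (0 : H) 1 ⊆ S := by
    intro w hw
    have : ‖w‖ = 1 := by simpa using hw
    simp [hSdef, show w ≠ 0 from fun h => by simp [h] at this]
  obtain ⟨C, hC⟩ := (isCompact_sphere (0 : H) 1).exists_bound_of_continuousOn
    (hcont.mono hsub)
  refine ⟨max C 1, lt_of_lt_of_le one_pos (le_max_right _ _), fun w hw => ?_⟩
  exact le_trans (hC w (by simpa using hw)) (le_max_left _ _)

end Stmt12AuxD

open Stmt12Aux Stmt12AuxD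


namespace Stmt12AuxE

variable (m : ℕ)

local notation "Em" => EuclideanSpace ℝ (Fin m)
local notation "Hm" => EuclideanSpace ℝ (Fin (m + 1))

def F1 : EuclideanSpace ℝ (Fin m) → ℝ := fun u => ‖J m u + pad m 1 0‖

lemma pad_one_ne (u : Em) : pad m 1 u ≠ 0 := by
  intro h
  have h1 := one_le_norm_pad_one m u
  rw [h] at h1
  simp at h1
  linarith

lemma contDiff_F1 : ContDiff ℝ (⊤ : ℕ∞) (F1 m) := by
  rw [contDiff_iff_contDiffAt]
  intro u
  have hne : J m u + pad m 1 0 ≠ 0 := by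
    rw [J_add_pad]; exact pad_one_ne m u
  exact (contDiffAt_norm ℝ hne).comp u
    (((J m).contDiff.add contDiff_const).contDiffAt)

lemma F1_bound (k : ℕ) (hk : 1 ≤ k) : ∃ C : ℝ, 0 < C ∧
    ∀ u : Em, ‖iteratedFDeriv ℝ k (F1 m) u‖ ≤ C := by
  obtain ⟨C, hC0, hCs⟩ := sphere_bound (H := Hm) k
  have hball : ∀ z : Hm, 1 ≤ ‖z‖ →
      ‖iteratedFDeriv ℝ k (fun w : Hm => ‖w‖) z‖ ≤ C := by
    intro z h1
    have hz : z ≠ 0 := by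
      intro h; rw [h] at h1; simp at h1; linarith
    refine (homog k z hz).trans ?_
    have h0 : (0:ℝ) < ‖z‖ := lt_of_lt_of_le one_pos h1
    have hinv : ‖z‖⁻¹ ≤ 1 := inv_le_one_of_one_le₀ h1
    have hc1 : ‖z‖ * ‖z‖⁻¹ ^ k ≤ 1 := by
      calc ‖z‖ * ‖z‖⁻¹ ^ k ≤ ‖z‖ * ‖z‖⁻¹ ^ 1 := by
            exact mul_le_mul_of_nonneg_left
              (pow_le_pow_of_le_one (by positivity) hinv hk) h0.le
        _ = 1 := by rw [pow_one, mul_inv_cancel₀ h0.ne']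
    have hw1 : ‖(‖z‖⁻¹ • z)‖ = 1 := by
      rw [norm_smul, Real.norm_eq_abs, abs_of_pos (by positivity), inv_mul_cancel₀ h0.ne']
    calc ‖z‖ * ‖z‖⁻¹ ^ k * ‖iteratedFDeriv ℝ k (fun w : Hm => ‖w‖) (‖z‖⁻¹ • z)‖
        ≤ 1 * C := mul_le_mul hc1 (hCs _ hw1) (norm_nonneg _) zero_le_one
      _ = C := one_mul C
  refine ⟨C, hC0, fun u => ?_⟩
  set N1 : Hm → ℝ := fun z => ‖z + pad m 1 0‖ with hN1
  set T : Set Hm := {z | z + pad m 1 0 ≠ 0} with hTdef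
  have hT : IsOpen T := by
    have : T = (fun z : Hm => z + pad m 1 0) ⁻¹' {0}ᶜ := rfl
    rw [this]
    exact isOpen_compl_singleton.preimage (continuous_id.add continuous_const)
  have hTu : UniqueDiffOn ℝ T := hT.uniqueDiffOn
  have hfT : ContDiffOn ℝ (⊤ : ℕ∞) N1 T := fun z hz =>
    (((contDiffAt_norm ℝ hz).comp z
      ((contDiff_id.add contDiff_const).contDiffAt))).contDiffWithinAt
  have hJT : ∀ u' : Em, J m u' ∈ T := by
    intro u'
    rw [hTdef, Set.mem_setOf_eq, J_add_pad]
    exact pad_one_ne m u'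
  have hpre : (⇑(J m)) ⁻¹' T = Set.univ := Set.eq_univ_of_forall hJT
  have key := (J m).iteratedFDerivWithin_comp_right (f := N1) hfT hTu
    (by rw [hpre]; exact uniqueDiffOn_univ) (hJT u) (i := k) (by exact_mod_cast le_top)
  rw [hpre, iteratedFDerivWithin_univ] at key
  have hF1 : F1 m = N1 ∘ ⇑(J m) := rfl
  rw [hF1, key]
  refine le_trans (ContinuousMultilinearMap.norm_compContinuousLinearMap_le _ _) ?_
  have hprod : ∏ _i : Fin k, ‖J m‖ ≤ 1 := by
    rw [Finset.prod_const, Finset.card_univ, Fintype.card_fin]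
    exact pow_le_one₀ (norm_nonneg _) (norm_J_le m)
  have hwg : iteratedFDerivWithin ℝ k N1 T (J m u) = iteratedFDeriv ℝ k N1 (J m u) :=
    iteratedFDerivWithin_of_isOpen k hT (hJT u)
  have htrans : iteratedFDeriv ℝ k N1 (J m u)
      = iteratedFDeriv ℝ k (fun w : Hm => ‖w‖) (J m u + pad m 1 0) :=
    iteratedFDeriv_comp_add_right'' k (fun w : Hm => ‖w‖) (pad m 1 0) (J m u)
  have hnorm1 : 1 ≤ ‖J m u + pad m 1 0‖ := by
    rw [J_add_pad]; exact one_le_norm_pad_one m u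
  calc ‖iteratedFDerivWithin ℝ k N1 T (J m u)‖ * ∏ _i : Fin k, ‖J m‖
      ≤ C * 1 := by
        refine mul_le_mul ?_ hprod (Finset.prod_nonneg fun _ _ => norm_nonneg _) hC0.le
        rw [hwg, htrans]
        exact hball _ hnorm1
    _ = C := mul_one C

end Stmt12AuxE


open Stmt12Aux Stmt12AuxD Stmt12AuxE

/-- Existence of a smoothed distance function `d̃_p` on `ℝ^m`:
`|d̃_p(x,y) − |x−y|| < 1/√p` and `|∂^α_x d̃_p| ≤ c_{|α|} p^{(|α|−1)/2}`, with the
constants `c_k` independent of `p`. -/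
theorem stmt12 (m : ℕ) (hm : 1 ≤ m) :
    ∃ c : ℕ → ℝ, (∀ k, 0 < c k) ∧
      ∀ p : ℕ, 0 < p →
        ∃ d : EuclideanSpace ℝ (Fin m) × EuclideanSpace ℝ (Fin m) → ℝ,
          ContDiff ℝ (⊤ : ℕ∞) d ∧
          (∀ x y, |d (x, y) - ‖x - y‖| < 1 / Real.sqrt p) ∧
          (∀ k : ℕ, 1 ≤ k → ∀ y x,
            ‖iteratedFDeriv ℝ k (fun x' => d (x', y)) x‖ ≤
              c k * (p : ℝ) ^ (((k : ℝ) - 1) / 2)) := by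
  have hmain : ∀ k : ℕ, ∃ C : ℝ, 0 < C ∧ (1 ≤ k → ∀ u : EuclideanSpace ℝ (Fin m),
      ‖iteratedFDeriv ℝ k (F1 m) u‖ ≤ C) := by
    intro k
    by_cases hk : 1 ≤ k
    · obtain ⟨C, h1, h2⟩ := F1_bound m k hk
      exact ⟨C, h1, fun _ => h2⟩
    · exact ⟨1, one_pos, fun h => absurd h hk⟩
  choose C hC0 hCb using hmain
  refine ⟨fun k => C k * 2 ^ k + 1, fun k => by have := hC0 k; positivity, ?_⟩
  intro p hp
  have hsp : (0:ℝ) < Real.sqrt p := Real.sqrt_pos.2 (by exact_mod_cast hp)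
  set ε : ℝ := (2 * Real.sqrt p)⁻¹ with hεdef
  have hε0 : 0 < ε := by positivity
  set G : EuclideanSpace ℝ (Fin m) → ℝ := fun v => ε * F1 m (ε⁻¹ • v) with hGdef
  have hval : ∀ v : EuclideanSpace ℝ (Fin m), G v = Real.sqrt (ε^2 + ‖v‖^2) := by
    intro v
    have h1 : F1 m (ε⁻¹ • v) = Real.sqrt (1 + ‖ε⁻¹ • v‖^2) := by
      show ‖J m (ε⁻¹ • v) + pad m 1 0‖ = _
      rw [J_add_pad, norm_pad]
      norm_num
    have h2 : ‖ε⁻¹ • v‖^2 = (ε⁻¹)^2 * ‖v‖^2 := by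
      rw [norm_smul, Real.norm_eq_abs, abs_of_pos (by positivity : (0:ℝ) < ε⁻¹), mul_pow]
    have h3 : ε * Real.sqrt (1 + (ε⁻¹)^2 * ‖v‖^2)
        = Real.sqrt (ε^2 * (1 + (ε⁻¹)^2 * ‖v‖^2)) := by
      rw [Real.sqrt_mul (sq_nonneg ε), Real.sqrt_sq hε0.le]
    rw [hGdef]
    simp only []
    rw [h1, h2, h3]
    congr 1
    field_simp
  refine ⟨fun q => G (q.1 - q.2), ?_, ?_, ?_⟩
  · have hG : ContDiff ℝ (⊤ : ℕ∞) G :=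
      contDiff_const.mul ((contDiff_F1 m).comp (contDiff_id.const_smul ε⁻¹))
    exact hG.comp (contDiff_fst.sub contDiff_snd)
  · intro x y
    have hpp : (0:ℝ) < 1 / Real.sqrt p := by positivity
    show |G (x - y) - ‖x - y‖| < 1 / Real.sqrt p
    rw [hval]
    set t := ‖x - y‖ with ht
    have ht0 : 0 ≤ t := norm_nonneg _
    have h2 : t ≤ Real.sqrt (ε^2 + t^2) := by
      calc t = Real.sqrt (t^2) := (Real.sqrt_sq ht0).symm
        _ ≤ _ := Real.sqrt_le_sqrt (by nlinarith [sq_nonneg ε])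
    have h1 : Real.sqrt (ε^2 + t^2) ≤ ε + t := by
      rw [show ε + t = Real.sqrt ((ε+t)^2) from (Real.sqrt_sq (by positivity)).symm]
      apply Real.sqrt_le_sqrt
      nlinarith
    have hlt : ε < 1 / Real.sqrt p := by
      rw [hεdef, one_div]
      have h2sp : Real.sqrt p < 2 * Real.sqrt p := by linarith
      exact (inv_lt_inv₀ (by positivity) hsp).2 h2sp
    rw [abs_lt]
    constructor <;> nlinarith
  · intro k hk y x
    have hsect : (fun x' => (fun q : EuclideanSpace ℝ (Fin m) × EuclideanSpace ℝ (Fin m) =>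
        G (q.1 - q.2)) (x', y)) = fun x' => G (x' + (-y)) := by
      funext x'
      simp [sub_eq_add_neg]
    rw [hsect, iteratedFDeriv_comp_add_right'' k G (-y) x]
    set v := x + -y with hv
    set gε : EuclideanSpace ℝ (Fin m) →L[ℝ] EuclideanSpace ℝ (Fin m) :=
      ε⁻¹ • ContinuousLinearMap.id ℝ _ with hgε
    have hGs : G = fun w => ε • ((F1 m ∘ ⇑gε) w) := by
      funext w
      simp [hGdef, hgε, Function.comp, smul_eq_mul]
    have hFs : ContDiff ℝ k (F1 m ∘ ⇑gε) :=
      ((contDiff_F1 m).comp_continuousLinearMap (g := gε)).of_le (by exact_mod_cast le_top)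
    rw [hGs, iteratedFDeriv_const_smul_apply' hFs.contDiffAt]
    rw [ContinuousLinearMap.iteratedFDeriv_comp_right gε (contDiff_F1 m) v
      (by exact_mod_cast le_top)]
    have hεinv : (0:ℝ) < ε⁻¹ := by positivity
    have hgnorm : ‖gε‖ ≤ ε⁻¹ := by
      refine ContinuousLinearMap.opNorm_le_bound _ hεinv.le fun w => ?_
      rw [hgε]
      simp [norm_smul, abs_of_pos hεinv, abs_of_pos hε0]
    have hprod : ∏ _i : Fin k, ‖gε‖ ≤ ε⁻¹ ^ k := by
      rw [Finset.prod_const, Finset.card_univ, Fintype.card_fin]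
      exact pow_le_pow_left₀ (norm_nonneg _) hgnorm k
    have hF := hCb k hk (gε v)
    have hcomp := ContinuousMultilinearMap.norm_compContinuousLinearMap_le
      (iteratedFDeriv ℝ k (F1 m) (gε v)) (fun _ : Fin k => gε)
    have hnorm : ‖ε • (iteratedFDeriv ℝ k (F1 m) (gε v)).compContinuousLinearMap
        (fun _ => gε)‖ ≤ ε * (C k * ε⁻¹ ^ k) := by
      refine (norm_smul_le ε ((iteratedFDeriv ℝ k (F1 m) (gε v)).compContinuousLinearMap fun _ => gε)).trans ?_
      rw [Real.norm_eq_abs, abs_of_pos hε0]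
      refine mul_le_mul_of_nonneg_left ?_ hε0.le
      refine hcomp.trans ?_
      exact mul_le_mul hF hprod (Finset.prod_nonneg fun _ _ => norm_nonneg _) (hC0 k).le
    refine hnorm.trans ?_
    -- arithmetic
    have hkk : k - 1 + 1 = k := Nat.succ_pred_eq_of_pos hk
    have hee : ε * ε⁻¹ ^ k = ε⁻¹ ^ (k-1) := by
      conv_lhs => rw [← hkk]
      rw [pow_succ, mul_comm, mul_assoc, inv_mul_cancel₀ hε0.ne', mul_one]
    have hεi : ε⁻¹ = 2 * Real.sqrt p := by rw [hεdef, inv_inv]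
    have hsqpow : Real.sqrt p ^ (k-1) = (p:ℝ) ^ (((k:ℝ) - 1) / 2) := by
      rw [Real.sqrt_eq_rpow, ← Real.rpow_natCast ((p:ℝ) ^ ((1:ℝ)/2)) (k-1),
        ← Real.rpow_mul (Nat.cast_nonneg p)]
      congr 1
      rw [Nat.cast_sub hk]
      push_cast
      ring
    have hP0 : (0:ℝ) ≤ (p:ℝ) ^ (((k:ℝ) - 1) / 2) := Real.rpow_nonneg (Nat.cast_nonneg p) _
    calc ε * (C k * ε⁻¹ ^ k) = C k * (ε * ε⁻¹ ^ k) := by ring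
      _ = C k * (2 * Real.sqrt p) ^ (k-1) := by rw [hee, hεi]
      _ = (C k * 2 ^ (k-1)) * Real.sqrt p ^ (k-1) := by rw [mul_pow]; ring
      _ = (C k * 2 ^ (k-1)) * (p:ℝ) ^ (((k:ℝ) - 1) / 2) := by rw [hsqpow]
      _ ≤ (C k * 2 ^ k + 1) * (p:ℝ) ^ (((k:ℝ) - 1) / 2) := by
          refine mul_le_mul_of_nonneg_right ?_ hP0
          have h2k : (2:ℝ) ^ (k-1) ≤ 2 ^ k := pow_le_pow_right₀ one_le_two (Nat.sub_le k 1)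
          nlinarith [(hC0 k)]
end
end

section
/- Let (X, μ) be a measure space and (U_α)_{α ∈ A} a countable family of measurable subsets with ∪_α U_α = X. For each α set I_α = {β ∈ A : U_α ∩ U_β ≠ ∅}, and assume there is K₀ ∈ ℕ with #I_α ≤ K₀ for all α. Let T : L²(X, μ) → L²(X, μ) be a linear map and ε ≥ 0 such that for every α ∈ A and every f ∈ L²(X, μ): ‖Tf‖_{L²(U_α)} ≤ ε Σ_{β ∈ I_α} ‖f‖_{L²(U_β)}. Then ‖Tf‖_{L²(X)} ≤ K₀^{3/2} ε ‖f‖_{L²(X)} for every f ∈ L²(X, μ). -/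
open MeasureTheory

noncomputable section

lemma aux_fin {X : Type*} [MeasurableSpace X] {μ : Measure X} (h : Lp ℂ 2 μ) :
    ∫⁻ x, (‖h x‖₊ : ENNReal) ^ 2 ∂μ ≠ ⊤ := by
  have := lintegral_rpow_enorm_lt_top_of_eLpNorm_lt_top (f := (h : X → ℂ))
    (two_ne_zero) (by norm_num) (Lp.eLpNorm_lt_top h)
  simp only [ENNReal.toReal_ofNat] at this
  rw [show ((2:ℝ)) = ((2:ℕ):ℝ) by norm_num] at this
  simp_rw [ENNReal.rpow_natCast] at this
  exact this.ne

lemma aux_int_eq {X : Type*} [MeasurableSpace X] {μ : Measure X} (h : Lp ℂ 2 μ) (s : Set X) :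
    ∫ x in s, ‖h x‖ ^ 2 ∂μ = (∫⁻ x in s, (‖h x‖₊ : ENNReal) ^ 2 ∂μ).toReal := by
  rw [integral_eq_lintegral_of_nonneg_ae (Filter.Eventually.of_forall fun x => sq_nonneg _)
    (((Lp.aestronglyMeasurable h).norm.pow 2).restrict)]
  congr 1
  refine lintegral_congr fun x => ?_
  rw [ENNReal.ofReal_pow (norm_nonneg _), ofReal_norm, enorm_eq_nnnorm]

/-- Real Cauchy–Schwarz step. -/
lemma aux_sq {ι : Type*} (s : Finset ι) (K₀ : ℕ) (hcard : s.card ≤ K₀) (ε B : ℝ)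
    (a : ι → ℝ) (ha : ∀ i, 0 ≤ a i) (hB : 0 ≤ B)
    (h : Real.sqrt B ≤ ε * ∑ i ∈ s, Real.sqrt (a i)) :
    B ≤ ε ^ 2 * K₀ * ∑ i ∈ s, a i := by
  have h0 : B = Real.sqrt B ^ 2 := (Real.sq_sqrt hB).symm
  rw [h0]
  calc Real.sqrt B ^ 2 ≤ (ε * ∑ i ∈ s, Real.sqrt (a i)) ^ 2 :=
        pow_le_pow_left₀ (Real.sqrt_nonneg _) h 2
    _ = ε ^ 2 * (∑ i ∈ s, Real.sqrt (a i)) ^ 2 := by ring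
    _ ≤ ε ^ 2 * (s.card * ∑ i ∈ s, Real.sqrt (a i) ^ 2) := by
        gcongr
        exact sq_sum_le_card_mul_sum_sq
    _ ≤ ε ^ 2 * (K₀ * ∑ i ∈ s, Real.sqrt (a i) ^ 2) := by
        gcongr
    _ = ε ^ 2 * K₀ * ∑ i ∈ s, a i := by
        rw [mul_assoc]
        congr 2
        exact Finset.sum_congr rfl fun i _ => Real.sq_sqrt (ha i)

/-- Transfer the squared local bound to `ℝ≥0∞`. -/
lemma aux_ofReal {ι : Type*} (s : Finset ι) (K₀ : ℕ) (ε : ℝ) (hε : 0 ≤ ε)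
    (a : ι → ENNReal) (ha : ∀ i, a i ≠ ⊤) (b : ENNReal) (hb : b ≠ ⊤)
    (h : b.toReal ≤ ε ^ 2 * K₀ * ∑ i ∈ s, (a i).toReal) :
    b ≤ (ENNReal.ofReal ε ^ 2 * K₀) * ∑ i ∈ s, a i := by
  calc b = ENNReal.ofReal b.toReal := (ENNReal.ofReal_toReal hb).symm
    _ ≤ ENNReal.ofReal (ε ^ 2 * K₀ * ∑ i ∈ s, (a i).toReal) := ENNReal.ofReal_le_ofReal h
    _ = (ENNReal.ofReal ε ^ 2 * K₀) * ∑ i ∈ s, a i := by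
        rw [ENNReal.ofReal_mul (by positivity), ENNReal.ofReal_mul (by positivity),
          ENNReal.ofReal_pow hε, ENNReal.ofReal_natCast,
          ENNReal.ofReal_sum_of_nonneg fun i _ => ENNReal.toReal_nonneg]
        congr 1
        exact Finset.sum_congr rfl fun i _ => ENNReal.ofReal_toReal (ha i)

/-- Double-sum swap with symmetric, boundedly-sized index sets. -/
lemma aux_swap {A : Type*} [Countable A] (K₀ : ℕ) (I : A → Finset A)
    (hsymm : ∀ α β, β ∈ I α ↔ α ∈ I β) (hcard : ∀ α, (I α).card ≤ K₀)
    (a : A → ENNReal) :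
    ∑' α, ∑ β ∈ I α, a β ≤ (K₀ : ENNReal) * ∑' β, a β := by
  classical
  have hrw : ∀ α : A, ∑ β ∈ I α, a β = ∑' β, if β ∈ I α then a β else 0 := by
    intro α
    rw [tsum_eq_sum (s := I α) (fun β hβ => if_neg hβ)]
    exact (Finset.sum_congr rfl fun β hβ => if_pos hβ).symm
  simp_rw [hrw]
  rw [ENNReal.tsum_comm]
  calc ∑' β, ∑' α, (if β ∈ I α then a β else 0)
      ≤ ∑' β, (K₀ : ENNReal) * a β := by
        refine ENNReal.tsum_le_tsum fun β => ?_
        rw [tsum_eq_sum (s := I β) (fun α hα => if_neg fun h => hα ((hsymm α β).mp h))]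
        calc ∑ α ∈ I β, (if β ∈ I α then a β else 0)
            ≤ ∑ α ∈ I β, a β := Finset.sum_le_sum fun α _ => by split <;> simp
          _ = (I β).card * a β := by rw [Finset.sum_const, nsmul_eq_mul]
          _ ≤ (K₀ : ENNReal) * a β := by
              gcongr
              exact_mod_cast hcard β
    _ = (K₀ : ENNReal) * ∑' β, a β := ENNReal.tsum_mul_left

lemma aux_indicator {A X : Type*} [Countable A] (K₀ : ℕ) (U : A → Set X)
    (hfin : ∀ α : A, {β : A | (U α ∩ U β).Nonempty}.Finite)
    (hcard : ∀ α : A, (hfin α).toFinset.card ≤ K₀)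
    (x : X) (β₀ : A) (hβ₀ : x ∈ U β₀) (g : X → ENNReal) :
    ∑' β, (U β).indicator g x ≤ (K₀ : ENNReal) * g x := by
  rw [tsum_eq_sum (s := (hfin β₀).toFinset) ?outside]
  · calc ∑ β ∈ (hfin β₀).toFinset, (U β).indicator g x
        ≤ ∑ _β ∈ (hfin β₀).toFinset, g x :=
          Finset.sum_le_sum fun β _ => Set.indicator_le_self _ _ x
      _ = (hfin β₀).toFinset.card * g x := by rw [Finset.sum_const, nsmul_eq_mul]
      _ ≤ (K₀ : ENNReal) * g x := by
          gcongr
          exact_mod_cast hcard β₀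
  case outside =>
    intro β hβ
    refine Set.indicator_of_notMem (fun hx => hβ ?_) _
    rw [Set.Finite.mem_toFinset]
    exact ⟨x, hβ₀, hx⟩

/-- Patching estimate: if a linear map `T` on `L²(X,μ)` satisfies local bounds
`‖Tf‖_{L²(U_α)} ≤ ε Σ_{β ∈ I_α} ‖f‖_{L²(U_β)}` over a countable cover of
intersection multiplicity at most `K₀`, then `‖Tf‖_{L²} ≤ K₀^{3/2} ε ‖f‖_{L²}`. -/
theorem stmt14 {X : Type*} [MeasurableSpace X] (μ : Measure X)
    {A : Type*} [Countable A] (U : A → Set X)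
    (hUmeas : ∀ α, MeasurableSet (U α))
    (hUcover : (⋃ α, U α) = Set.univ)
    (K₀ : ℕ)
    (hfin : ∀ α : A, {β : A | (U α ∩ U β).Nonempty}.Finite)
    (hcard : ∀ α : A, (hfin α).toFinset.card ≤ K₀)
    (T : Lp ℂ 2 μ →ₗ[ℂ] Lp ℂ 2 μ) (ε : ℝ) (hε : 0 ≤ ε)
    (hloc : ∀ (α : A) (f : Lp ℂ 2 μ),
      Real.sqrt (∫ x in U α, ‖(T f : Lp ℂ 2 μ) x‖ ^ 2 ∂μ) ≤
        ε * ∑ β ∈ (hfin α).toFinset, Real.sqrt (∫ x in U β, ‖f x‖ ^ 2 ∂μ)) :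
    ∀ f : Lp ℂ 2 μ,
      Real.sqrt (∫ x, ‖(T f : Lp ℂ 2 μ) x‖ ^ 2 ∂μ) ≤
        (K₀ : ℝ) ^ ((3 : ℝ) / 2) * ε * Real.sqrt (∫ x, ‖f x‖ ^ 2 ∂μ) := by
  classical
  intro f
  have hAfin := aux_fin f
  have hBfin := aux_fin (T f)
  have hafin : ∀ β : A, (∫⁻ x in U β, (‖f x‖₊ : ENNReal) ^ 2 ∂μ) ≠ ⊤ := fun β =>
    ((setLIntegral_le_lintegral _ _).trans_lt hAfin.lt_top).ne
  have hbfin : ∀ α : A, (∫⁻ x in U α, (‖(T f : Lp ℂ 2 μ) x‖₊ : ENNReal) ^ 2 ∂μ) ≠ ⊤ :=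
    fun α => ((setLIntegral_le_lintegral _ _).trans_lt hBfin.lt_top).ne
  -- Step 2 : squared local bound in ℝ≥0∞
  have step2 : ∀ α : A, (∫⁻ x in U α, (‖(T f : Lp ℂ 2 μ) x‖₊ : ENNReal) ^ 2 ∂μ)
      ≤ (ENNReal.ofReal ε ^ 2 * K₀) *
        ∑ β ∈ (hfin α).toFinset, ∫⁻ x in U β, (‖f x‖₊ : ENNReal) ^ 2 ∂μ := by
    intro α
    refine aux_ofReal _ K₀ ε hε _ hafin _ (hbfin α) ?_
    refine aux_sq _ K₀ (hcard α) ε _ _ (fun β => ENNReal.toReal_nonneg)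
      ENNReal.toReal_nonneg ?_
    have h1 := hloc α f
    rw [aux_int_eq (T f) (U α)] at h1
    simp_rw [aux_int_eq f] at h1
    exact h1
  -- Step 3 : double-sum swap
  have hsymm : ∀ α β : A, β ∈ (hfin α).toFinset ↔ α ∈ (hfin β).toFinset := by
    intro α β
    simp only [Set.Finite.mem_toFinset, Set.mem_setOf_eq]
    rw [Set.inter_comm]
  have step3 := aux_swap K₀ (fun α => (hfin α).toFinset) hsymm hcard
    (fun β => ∫⁻ x in U β, (‖f x‖₊ : ENNReal) ^ 2 ∂μ)
  -- Step 4 : bounded multiplicity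
  have step4 : ∑' β : A, ∫⁻ x in U β, (‖f x‖₊ : ENNReal) ^ 2 ∂μ
      ≤ (K₀ : ENNReal) * ∫⁻ x, (‖f x‖₊ : ENNReal) ^ 2 ∂μ := by
    have hmeas : AEMeasurable (fun x => (‖f x‖₊ : ENNReal) ^ 2) μ :=
      (Lp.aestronglyMeasurable f).enorm.pow_const 2
    have hrw : ∀ β : A, (∫⁻ x in U β, (‖f x‖₊ : ENNReal) ^ 2 ∂μ)
        = ∫⁻ x, (U β).indicator (fun x => (‖f x‖₊ : ENNReal) ^ 2) x ∂μ := fun β =>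
      (lintegral_indicator (hUmeas β) _).symm
    simp_rw [hrw]
    rw [← lintegral_tsum fun β => hmeas.indicator (hUmeas β)]
    calc ∫⁻ x, ∑' β, (U β).indicator (fun x => (‖f x‖₊ : ENNReal) ^ 2) x ∂μ
        ≤ ∫⁻ x, (K₀ : ENNReal) * (‖f x‖₊ : ENNReal) ^ 2 ∂μ := by
          refine lintegral_mono fun x => ?_
          obtain ⟨β₀, hβ₀⟩ : ∃ β₀, x ∈ U β₀ := by
            have hx : x ∈ ⋃ α, U α := hUcover ▸ Set.mem_univ x
            simpa using hx
          exact aux_indicator K₀ U hfin hcard x β₀ hβ₀ _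
      _ = (K₀ : ENNReal) * ∫⁻ x, (‖f x‖₊ : ENNReal) ^ 2 ∂μ :=
          lintegral_const_mul' _ _ (by simp)
  -- Combine
  have main : ∫⁻ x, (‖(T f : Lp ℂ 2 μ) x‖₊ : ENNReal) ^ 2 ∂μ
      ≤ ENNReal.ofReal ε ^ 2 * (K₀ : ENNReal) ^ 3 *
        ∫⁻ x, (‖f x‖₊ : ENNReal) ^ 2 ∂μ := by
    calc ∫⁻ x, (‖(T f : Lp ℂ 2 μ) x‖₊ : ENNReal) ^ 2 ∂μ
        = ∫⁻ x in ⋃ α, U α, (‖(T f : Lp ℂ 2 μ) x‖₊ : ENNReal) ^ 2 ∂μ := by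
          rw [hUcover, Measure.restrict_univ]
      _ ≤ ∑' α : A, ∫⁻ x in U α, (‖(T f : Lp ℂ 2 μ) x‖₊ : ENNReal) ^ 2 ∂μ :=
          lintegral_iUnion_le _ _
      _ ≤ ∑' α : A, (ENNReal.ofReal ε ^ 2 * K₀) *
            ∑ β ∈ (hfin α).toFinset, ∫⁻ x in U β, (‖f x‖₊ : ENNReal) ^ 2 ∂μ :=
          ENNReal.tsum_le_tsum step2
      _ = (ENNReal.ofReal ε ^ 2 * K₀) * ∑' α : A,
            ∑ β ∈ (hfin α).toFinset, ∫⁻ x in U β, (‖f x‖₊ : ENNReal) ^ 2 ∂μ :=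
          ENNReal.tsum_mul_left
      _ ≤ (ENNReal.ofReal ε ^ 2 * K₀) * ((K₀ : ENNReal) *
            ∑' β : A, ∫⁻ x in U β, (‖f x‖₊ : ENNReal) ^ 2 ∂μ) := by gcongr
      _ ≤ (ENNReal.ofReal ε ^ 2 * K₀) * ((K₀ : ENNReal) *
            ((K₀ : ENNReal) * ∫⁻ x, (‖f x‖₊ : ENNReal) ^ 2 ∂μ)) := by gcongr
      _ = ENNReal.ofReal ε ^ 2 * (K₀ : ENNReal) ^ 3 *
            ∫⁻ x, (‖f x‖₊ : ENNReal) ^ 2 ∂μ := by ring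
  -- Final conversion to real numbers
  have e1 : ∫ x, ‖(T f : Lp ℂ 2 μ) x‖ ^ 2 ∂μ
      = (∫⁻ x, (‖(T f : Lp ℂ 2 μ) x‖₊ : ENNReal) ^ 2 ∂μ).toReal := by
    rw [← setIntegral_univ, aux_int_eq, Measure.restrict_univ]
  have e2 : ∫ x, ‖f x‖ ^ 2 ∂μ = (∫⁻ x, (‖f x‖₊ : ENNReal) ^ 2 ∂μ).toReal := by
    rw [← setIntegral_univ, aux_int_eq, Measure.restrict_univ]
  rw [e1, e2]
  have hrhs_fin : ENNReal.ofReal ε ^ 2 * (K₀ : ENNReal) ^ 3 *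
      (∫⁻ x, (‖f x‖₊ : ENNReal) ^ 2 ∂μ) ≠ ⊤ := by
    refine ENNReal.mul_ne_top (ENNReal.mul_ne_top ?_ ?_) hAfin
    · exact ENNReal.pow_ne_top ENNReal.ofReal_ne_top
    · exact ENNReal.pow_ne_top (ENNReal.natCast_ne_top _)
  have h1 : (∫⁻ x, (‖(T f : Lp ℂ 2 μ) x‖₊ : ENNReal) ^ 2 ∂μ).toReal
      ≤ ε ^ 2 * (K₀ : ℝ) ^ 3 * (∫⁻ x, (‖f x‖₊ : ENNReal) ^ 2 ∂μ).toReal := by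
    have h2 := ENNReal.toReal_mono hrhs_fin main
    rwa [ENNReal.toReal_mul, ENNReal.toReal_mul, ENNReal.toReal_pow, ENNReal.toReal_pow,
      ENNReal.toReal_ofReal hε, ENNReal.toReal_natCast] at h2
  have hK : (K₀ : ℝ) ^ ((3 : ℝ) / 2) = Real.sqrt ((K₀ : ℝ) ^ 3) := by
    rw [Real.sqrt_eq_rpow, ← Real.rpow_natCast (K₀ : ℝ) 3,
      ← Real.rpow_mul (Nat.cast_nonneg _)]
    norm_num
  calc Real.sqrt ((∫⁻ x, (‖(T f : Lp ℂ 2 μ) x‖₊ : ENNReal) ^ 2 ∂μ).toReal)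
      ≤ Real.sqrt (ε ^ 2 * (K₀ : ℝ) ^ 3 * (∫⁻ x, (‖f x‖₊ : ENNReal) ^ 2 ∂μ).toReal) :=
        Real.sqrt_le_sqrt h1
    _ = (K₀ : ℝ) ^ ((3 : ℝ) / 2) * ε *
        Real.sqrt ((∫⁻ x, (‖f x‖₊ : ENNReal) ^ 2 ∂μ).toReal) := by
      rw [Real.sqrt_mul (by positivity), Real.sqrt_mul (by positivity),
        Real.sqrt_sq hε, hK]
      ring
end
end
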